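/- For every d ≥ 1, the longest palindromic factor of the prefix ν(d) of the infinite word ν = 0^1 1^1 0^2 1^2 0^3 1^3 ... has length O(√d); more precisely, any palindromic factor of ν(d) has length at most c·√d for an absolute constant c. -/

import Mathlib

/-- The prefix of length `d` of the infinite word `ν = 0^1 1^1 0^2 1^2 0^3 1^3 …`. -/
def nuPref (d : ℕ) : List Bool :=
  (((List.range d).map fun i =>
      List.replicate (i + 1) false ++ List.replicate (i + 1) true).flatten).take d

/-- value of the infinite word at position n -/
def nuF (n : ℕ) : Bool := decide (n < Nat.sqrt n * Nat.sqrt n + Nat.sqrt n)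

/-- boundaries: 1,2,4,6,9,12,... -/
def bnd (j : ℕ) : ℕ := (j/2+1) * (j/2+1) + (j % 2) * (j/2+1)

def gapB (j : ℕ) : ℕ := j/2 + 1 + j % 2

lemma sqrt_eq_k {n k : ℕ} (h1 : k*k ≤ n) (h2 : n < (k+1)*(k+1)) : Nat.sqrt n = k := by
  have a := Nat.le_sqrt.mpr h1
  have b := Nat.sqrt_lt.mpr h2
  omega

lemma nuF_false {k j : ℕ} (hj : j ≤ k) : nuF (k*(k+1) + j) = false := by
  have hs : Nat.sqrt (k*(k+1)+j) = k := sqrt_eq_k (by nlinarith) (by nlinarith)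
  simp [nuF, hs]; nlinarith

lemma nuF_true {k j : ℕ} (hj : j ≤ k) : nuF ((k+1)*(k+1) + j) = true := by
  have hs : Nat.sqrt ((k+1)*(k+1)+j) = k+1 := sqrt_eq_k (by nlinarith) (by nlinarith)
  simp [nuF, hs]; nlinarith

lemma bnd_even (m : ℕ) : bnd (2*m) = (m+1)*(m+1) := by
  unfold bnd
  rw [show (2*m)/2 = m by omega, show (2*m)%2 = 0 by omega]
  ring

lemma bnd_odd (m : ℕ) : bnd (2*m+1) = (m+1)*(m+1) + (m+1) := by
  unfold bnd
  rw [show (2*m+1)/2 = m by omega, show (2*m+1)%2 = 1 by omega]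
  ring

lemma bnd_add (j : ℕ) : bnd (j+1) = bnd j + gapB j := by
  rcases Nat.even_or_odd j with ⟨m, rfl⟩ | ⟨m, rfl⟩
  · rw [show m+m = 2*m by ring, show 2*m+1 = 2*m+1 from rfl, bnd_even, bnd_odd]
    unfold gapB; rw [show (2*m)/2 = m by omega, show (2*m)%2 = 0 by omega]
  · rw [show 2*m+1+1 = 2*(m+1) by ring, bnd_even, bnd_odd]
    unfold gapB; rw [show (2*m+1)/2 = m by omega, show (2*m+1)%2 = 1 by omega]; ring

lemma gapB_pos (j : ℕ) : 1 ≤ gapB j := by unfold gapB; omega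
lemma gapB_mono : Monotone gapB := monotone_nat_of_le_succ (by intro j; unfold gapB; omega)
lemma gapB_add2 (j : ℕ) : gapB (j+2) = gapB j + 1 := by unfold gapB; omega

lemma bnd_mono : StrictMono bnd := strictMono_nat_of_lt_succ (by
  intro j; rw [bnd_add]; have := gapB_pos j; omega)

lemma bnd_ge (j : ℕ) : j + 1 ≤ bnd j := by
  induction j with
  | zero => simp [bnd]
  | succ n ih =>
    have h := bnd_mono (Nat.lt_succ_self n)
    rw [Nat.succ_eq_add_one] at h
    omega

lemma trans_bnd {n : ℕ} (h : nuF n ≠ nuF (n+1)) : ∃ j, bnd j = n + 1 := by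
  set k := Nat.sqrt n with hk
  have hk1 : k*k ≤ n := by have h := Nat.sqrt_le' n; simpa [pow_two] using h
  have hk2 : n < (k+1)*(k+1) := by
    have h := Nat.lt_succ_sqrt' n
    simpa [pow_two, Nat.succ_eq_add_one] using h
  have hmono : k ≤ Nat.sqrt (n+1) := Nat.sqrt_le_sqrt (by omega)
  have hub : Nat.sqrt (n+1) ≤ k + 1 := by
    have : n + 1 ≤ (k+1)*(k+1) := hk2
    calc Nat.sqrt (n+1) ≤ Nat.sqrt ((k+1)*(k+1)) := Nat.sqrt_le_sqrt this
      _ = k+1 := by rw [show (k+1)*(k+1) = (k+1)^2 by ring]; exact Nat.sqrt_eq' (k+1)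
  rcases (by omega : Nat.sqrt (n+1) = k ∨ Nat.sqrt (n+1) = k+1) with hs | hs
  · have heq : n + 1 = k*k + k := by
      simp only [nuF, hs, ← hk] at h
      by_cases h1 : n < k*k+k <;> by_cases h2 : n+1 < k*k+k <;> simp [h1, h2] at h <;> omega
    obtain ⟨k', hk'⟩ : ∃ k', k = k'+1 := ⟨k-1, by omega⟩
    rw [hk'] at heq
    exact ⟨2*k'+1, by rw [bnd_odd]; omega⟩
  · have : (k+1)*(k+1) ≤ n+1 := by
      have h := Nat.sqrt_le' (n+1); rw [hs] at h
      simpa [pow_two] using h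
    exact ⟨2*k, by rw [bnd_even]; omega⟩

lemma bnd_trans (j : ℕ) : ∃ n, bnd j = n + 1 ∧ nuF n ≠ nuF (n+1) := by
  rcases Nat.even_or_odd j with ⟨m, rfl⟩ | ⟨m, rfl⟩
  · refine ⟨m*(m+1) + m, ?_, ?_⟩
    · rw [show m+m = 2*m by ring, bnd_even]; ring
    · rw [show m*(m+1)+m+1 = (m+1)*(m+1) + 0 by ring, nuF_false (le_refl m),
        nuF_true (Nat.zero_le m)]
      simp
  · refine ⟨(m+1)*(m+1) + m, ?_, ?_⟩
    · rw [bnd_odd]; ring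
    · rw [show (m+1)*(m+1)+m+1 = (m+1)*(m+2) + 0 by ring, nuF_true (le_refl m),
        nuF_false (Nat.zero_le (m+1))]
      simp

lemma next_bnd (a : ℕ) : ∃ j, a < bnd j ∧ bnd j ≤ a + Nat.sqrt a + 1 := by
  set k := Nat.sqrt a with hk
  have hk1 : k*k ≤ a := by have h := Nat.sqrt_le' a; simpa [pow_two] using h
  have hk2 : a < (k+1)*(k+1) := by
    have h := Nat.lt_succ_sqrt' a
    simpa [pow_two, Nat.succ_eq_add_one] using h
  by_cases h : a < k*k + k
  · have hk0 : 1 ≤ k := by omega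
    obtain ⟨k', hk'⟩ : ∃ k', k = k'+1 := ⟨k-1, by omega⟩
    rw [hk'] at h hk1 ⊢
    exact ⟨2*k'+1, by rw [bnd_odd]; constructor <;> omega⟩
  · have hx : (k+1)*(k+1) = k*k + 2*k + 1 := by ring
    exact ⟨2*k, by rw [bnd_even]; constructor <;> omega⟩

lemma palin_short (p L d : ℕ) (hL : p + L ≤ d)
    (hp : ∀ i, i < L → nuF (p+i) = nuF (p + (L - 1 - i))) :
    L ≤ 3 * (Nat.sqrt d + 1) := by
  by_contra hcon
  push_neg at hcon
  set K := Nat.sqrt d + 1 with hKdef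
  have hK : 1 ≤ K := by omega
  have hLK : 3*K + 1 ≤ L := by omega
  have hs : ∀ a, a < d → Nat.sqrt a + 1 ≤ K := by
    intro a ha
    have := Nat.sqrt_le_sqrt (le_of_lt ha)
    omega
  set W : ℕ → Prop := fun j => p + 1 ≤ bnd j ∧ bnd j ≤ p + L - 1 with hWdef
  -- mirror lemma
  have mirror : ∀ j, W j → ∃ j', bnd j + bnd j' = 2*p + L ∧ W j' := by
    intro j hj
    obtain ⟨h1, h2⟩ := hj
    obtain ⟨n, hn, hne⟩ := bnd_trans j
    have hi : n = p + (n - p) := by omega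
    set i := n - p with hidef
    have hiL : i + 1 < L := by omega
    have e1 := hp i (by omega)
    have e2 := hp (i+1) hiL
    have hx1 : L - 1 - (i+1) = L - 2 - i := by omega
    have hx2 : L - 1 - i = (L - 2 - i) + 1 := by omega
    rw [hx1] at e2
    rw [hx2] at e1
    have hne2 : nuF (p + (L-2-i)) ≠ nuF ((p + (L-2-i)) + 1) := by
      intro hc
      apply hne
      rw [hi]
      rw [e1]
      rw [show p + i + 1 = p + (i+1) by omega, e2]
      rw [show p + (L - 2 - i + 1) = p + (L-2-i) + 1 by omega]
      exact hc.symm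
    obtain ⟨j', hj'⟩ := trans_bnd hne2
    refine ⟨j', by omega, by constructor <;> omega⟩
  -- no fixed point
  have nofix : ∀ j, W j → 2 * bnd j ≠ 2*p + L := by
    intro j hj heq
    obtain ⟨h1, h2⟩ := hj
    obtain ⟨n, hn, hne⟩ := bnd_trans j
    have hi : n = p + (n - p) := by omega
    set i := n - p with hidef
    have e1 := hp i (by omega)
    have hx : L - 1 - i = i + 1 := by omega
    rw [hx] at e1
    apply hne
    rw [hi, e1, show p + (i+1) = p + i + 1 by omega]
  -- three boundaries in the window
  have hpd : p < d := by omega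
  obtain ⟨a1, ha1, ha1'⟩ := next_bnd p
  have hb1 : bnd a1 ≤ p + K := by have := hs p hpd; omega
  obtain ⟨a2, ha2, ha2'⟩ := next_bnd (bnd a1)
  have hb2 : bnd a2 ≤ p + 2*K := by have := hs (bnd a1) (by omega); omega
  obtain ⟨a3, ha3, ha3'⟩ := next_bnd (bnd a2)
  have hb3 : bnd a3 ≤ p + 3*K := by have := hs (bnd a2) (by omega); omega
  have hW1 : W a1 := ⟨by omega, by omega⟩
  have hW2 : W a2 := ⟨by omega, by omega⟩
  have hW3 : W a3 := ⟨by omega, by omega⟩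
  have h12 : a1 < a2 := bnd_mono.lt_iff_lt.mp (by omega)
  have h23 : a2 < a3 := bnd_mono.lt_iff_lt.mp (by omega)
  -- least and greatest window boundary indices
  classical
  have exW : ∃ j, W j := ⟨a1, hW1⟩
  set jmin := Nat.find exW with hjmin
  have hWmin : W jmin := Nat.find_spec exW
  have hminle : ∀ j, W j → jmin ≤ j := fun j hj => Nat.find_min' exW hj
  have hbound : ∀ j, W j → j ≤ p + L := by
    intro j hj
    have := bnd_ge j
    obtain ⟨_, h2⟩ := hj
    omega
  set jmax := Nat.findGreatest W (p+L) with hjmax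
  have hWmax : W jmax := Nat.findGreatest_spec (hbound _ hW3) hW3
  have hmaxge : ∀ j, W j → j ≤ jmax := fun j hj => Nat.le_findGreatest (hbound j hj) hj
  have hrange : jmin + 2 ≤ jmax := by
    have l1 := hminle a1 hW1
    have l3 := hmaxge a3 hW3
    omega
  have hWint : ∀ j, jmin ≤ j → j ≤ jmax → W j := by
    intro j hj1 hj2
    have m1 : bnd jmin ≤ bnd j := bnd_mono.monotone hj1
    have m2 : bnd j ≤ bnd jmax := bnd_mono.monotone hj2
    exact ⟨by have := hWmin.1; omega, by have := hWmax.2; omega⟩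
  have hsum1 : bnd jmin + bnd jmax = 2*p + L := by
    obtain ⟨u, hu, hWu⟩ := mirror jmin hWmin
    obtain ⟨v, hv, hWv⟩ := mirror jmax hWmax
    have h3 : bnd u ≤ bnd jmax := bnd_mono.monotone (hmaxge u hWu)
    have h4 : bnd jmin ≤ bnd v := bnd_mono.monotone (hminle v hWv)
    omega
  have hmm : bnd jmin < bnd (jmin+1) := bnd_mono (by omega)
  have hmm2 : bnd (jmax-1) < bnd jmax := bnd_mono (by omega)
  have hsum2 : bnd (jmin+1) + bnd (jmax-1) = 2*p + L := by
    have hWa : W (jmin+1) := hWint _ (by omega) (by omega)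
    have hWb : W (jmax-1) := hWint _ (by omega) (by omega)
    obtain ⟨u, hu, hWu⟩ := mirror (jmin+1) hWa
    obtain ⟨v, hv, hWv⟩ := mirror (jmax-1) hWb
    have hu2 : u ≤ jmax := hmaxge u hWu
    have hu3 : u ≠ jmax := by
      intro h; rw [h] at hu; omega
    have hu4 : bnd u ≤ bnd (jmax-1) := bnd_mono.monotone (by omega)
    have hv2 : jmin ≤ v := hminle v hWv
    have hv3 : v ≠ jmin := by
      intro h; rw [h] at hv; omega
    have hv4 : bnd (jmin+1) ≤ bnd v := bnd_mono.monotone (by omega)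
    omega
  by_cases hcase : jmax = jmin + 2
  · apply nofix (jmin+1) (hWint _ (by omega) (by omega))
    rw [hcase] at hsum2
    rw [show jmin + 2 - 1 = jmin + 1 by omega] at hsum2
    omega
  · have hge3 : jmin + 3 ≤ jmax := by omega
    have e1 : bnd (jmin+1) = bnd jmin + gapB jmin := bnd_add jmin
    have e2 : bnd (jmax-1+1) = bnd (jmax-1) + gapB (jmax-1) := bnd_add _
    rw [show jmax-1+1 = jmax by omega] at e2
    have g1 : gapB (jmin+2) ≤ gapB (jmax-1) := gapB_mono (by omega)
    have g2 : gapB (jmin+2) = gapB jmin + 1 := gapB_add2 jmin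
    omega

lemma join_eq (N : ℕ) :
    (((List.range N).map fun i =>
      List.replicate (i + 1) false ++ List.replicate (i + 1) true).flatten)
    = (List.range (N*(N+1))).map nuF := by
  induction N with
  | zero => simp
  | succ N ih =>
    rw [List.range_succ, List.map_append, List.flatten_append,
      show (N+1)*(N+1+1) = N*(N+1) + (2*N+2) by ring, List.range_add,
      List.map_append, ← ih, List.map_map]
    congr 1
    simp only [List.map_cons, List.map_nil, List.flatten_cons, List.flatten_nil,
      List.append_nil]
    rw [show 2*N+2 = (N+1) + (N+1) by ring, List.range_add, List.map_append, List.map_map]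
    congr 1
    · symm
      rw [List.eq_replicate_iff]
      refine ⟨by simp, ?_⟩
      intro b hb
      simp only [List.mem_map, List.mem_range] at hb
      obtain ⟨x, hx, rfl⟩ := hb
      simpa [Function.comp] using nuF_false (k := N) (j := x) (by omega)
    · symm
      rw [List.eq_replicate_iff]
      refine ⟨by simp, ?_⟩
      intro b hb
      simp only [List.mem_map, List.mem_range] at hb
      obtain ⟨x, hx, rfl⟩ := hb
      have h := nuF_true (k := N) (j := x) (by omega)
      simpa [Function.comp, show N*(N+1) + (N+1+x) = (N+1)*(N+1) + x by ring] using h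

lemma nuPref_eq (d : ℕ) :
    (((List.range d).map fun i =>
      List.replicate (i + 1) false ++ List.replicate (i + 1) true).flatten).take d
    = (List.range d).map nuF := by
  rw [join_eq, ← List.map_take, List.take_range,
    Nat.min_eq_left (Nat.le_mul_of_pos_right d (by omega))]

theorem stmt9' : ∃ C : ℝ, 0 < C ∧ ∀ d : ℕ, 1 ≤ d →
    ∀ s mid t : List Bool,
      ((((List.range d).map fun i =>
        List.replicate (i + 1) false ++ List.replicate (i + 1) true).flatten).take d)
        = s ++ mid ++ t → mid.reverse = mid →
      (mid.length : ℝ) ≤ C * Real.sqrt d := by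
  refine ⟨6, by norm_num, ?_⟩
  intro d hd s mid t heq hpal
  rw [nuPref_eq, List.append_assoc] at heq
  have hlen : d = s.length + mid.length + t.length := by
    have h := congrArg List.length heq
    simp only [List.length_map, List.length_range, List.length_append] at h
    omega
  have hmidget : ∀ i, (hi : i < mid.length) → nuF (s.length + i) = mid[i] := by
    intro i hi
    have hlt : s.length + i < ((List.range d).map nuF).length := by
      simp only [List.length_map, List.length_range]; omega
    have e := List.getElem_of_eq heq hlt
    rw [List.getElem_map, List.getElem_range] at e
    rw [e, List.getElem_append_right (by omega)]
    simp only [Nat.add_sub_cancel_left]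
    rw [List.getElem_append_left hi]
  have key : ∀ i, i < mid.length →
      nuF (s.length + i) = nuF (s.length + (mid.length - 1 - i)) := by
    intro i hi
    rw [hmidget i hi, hmidget (mid.length - 1 - i) (by omega)]
    have hb : mid.length - 1 - i < mid.reverse.length := by
      simp only [List.length_reverse]; omega
    have e2 := List.getElem_of_eq hpal hb
    rw [List.getElem_reverse] at e2
    simp only [show mid.length - 1 - (mid.length - 1 - i) = i from by omega] at e2
    exact e2
  have hmain : mid.length ≤ 3 * (Nat.sqrt d + 1) :=
    palin_short s.length mid.length d (by omega) key
  have h1 : (Nat.sqrt d : ℝ) ≤ Real.sqrt d := by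
    calc (Nat.sqrt d : ℝ) = Real.sqrt ((Nat.sqrt d : ℝ)^2) := (Real.sqrt_sq (by positivity)).symm
      _ ≤ Real.sqrt d := by
          apply Real.sqrt_le_sqrt
          have h : ((Nat.sqrt d)^2 : ℕ) ≤ d := Nat.sqrt_le' d
          exact_mod_cast h
  have h2 : 1 ≤ Real.sqrt d := by
    rw [show (1:ℝ) = Real.sqrt 1 by simp]
    exact Real.sqrt_le_sqrt (by exact_mod_cast hd)
  have h3 : (mid.length : ℝ) ≤ 3 * ((Nat.sqrt d : ℝ) + 1) := by exact_mod_cast hmain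
  linarith

/-- Every palindromic factor of `ν(d)` has length at most `C·√d` for an absolute constant `C`. -/
theorem stmt9 : ∃ C : ℝ, 0 < C ∧ ∀ d : ℕ, 1 ≤ d →
    ∀ s mid t : List Bool, nuPref d = s ++ mid ++ t → mid.reverse = mid →
      (mid.length : ℝ) ≤ C * Real.sqrt d := by
  exact stmt9'
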